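/- Assume n > 3f, T ≥ 1, Ψ ≥ T, and pulse sparsity. Suppose a correct node v satisfies r(v,t) = 1 in a round t > T + 2. Then, letting U = {u ∈ V∖F : trig(u,t) = 1}, we have v ∈ U and, for every ρ ∈ {1,…,T}: every u ∈ U satisfies r(u, t+ρ−1) = ρ, and every correct u ∉ U satisfies r(u, t+ρ−1) = ⊥. (That is, the correct nodes in U jointly and exclusively execute rounds 1 through T of one consensus instance during rounds t through t+T−1, while no other correct node executes any round of it.) -/

import Mathlib

/-- Corollary: consistent execution of the pruning instances.
A network on `V` with `n = |V| > 3f` nodes and faulty set `F`, `|F| ≤ f`.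
Correct nodes broadcast accepted-pulse bits `b(u,t)`, with received values
`brec` (agreeing with sent values for correct senders).  Pulse sparsity: for
correct `v, w` and rounds `2 < s < s' < s + Ψ`, not both `b(v,s) = 1` and
`b(w,s') = 1`.  Each correct node maintains `r(v,t) ∈ {1,…,T} ∪ {⊥}`
(`⊥ = none`), with trigger `trig(v,t) = 1` iff `v` received `b = 1` from at
least `n − 2f` nodes in round `t−1`, and for `t ≥ 2`: `r(v,t) = 1` if the
trigger holds, otherwise `r(v,t) = r(v,t−1)+1` if `r(v,t−1) ∈ {1,…,T−1}`, and
`r(v,t) = ⊥` if `r(v,t−1) ∈ {T,⊥}`.  If a correct node `v` has `r(v,t) = 1`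
in a round `t > T + 2`, then, with `U` the set of correct nodes triggered in
round `t`: `v ∈ U`, and for every `ρ ∈ {1,…,T}` every `u ∈ U` has
`r(u,t+ρ−1) = ρ` while every correct `u ∉ U` has `r(u,t+ρ−1) = ⊥`. -/
theorem pruning_consistent {V : Type*} [Fintype V] [DecidableEq V]
    (F : Finset V) (f T Ψ : ℕ)
    (hn : Fintype.card V > 3 * f) (hF : F.card ≤ f)
    (hT : 1 ≤ T) (hΨ : T ≤ Ψ)
    (b : V → ℕ → ℕ) (brec : V → V → ℕ → ℕ) (r : V → ℕ → Option ℕ)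
    (hbbits : ∀ u, u ∉ F → ∀ t, b u t = 0 ∨ b u t = 1)
    (hbrec : ∀ v u, u ∉ F → ∀ t, brec v u t = b u t)
    (hsparse : ∀ v w, v ∉ F → w ∉ F → ∀ s s', 2 < s → s < s' → s' < s + Ψ →
      ¬(b v s = 1 ∧ b w s' = 1))
    (hrrange : ∀ v, v ∉ F → ∀ t,
      r v t = none ∨ ∃ ρ, r v t = some ρ ∧ 1 ≤ ρ ∧ ρ ≤ T)
    (hr : ∀ v, v ∉ F → ∀ t, 2 ≤ t →
      r v t =
        if Fintype.card V - 2 * f ≤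
            (Finset.univ.filter fun u => brec v u (t - 1) = 1).card
        then some 1
        else match r v (t - 1) with
          | some ρ => if ρ < T then some (ρ + 1) else none
          | none => none) :
    ∀ v, v ∉ F → ∀ t, T + 2 < t → r v t = some 1 →
      v ∈ {u : V | u ∉ F ∧ Fintype.card V - 2 * f ≤
              (Finset.univ.filter fun z => brec u z (t - 1) = 1).card} ∧
      ∀ ρ, 1 ≤ ρ → ρ ≤ T →
        (∀ u ∈ {u : V | u ∉ F ∧ Fintype.card V - 2 * f ≤
              (Finset.univ.filter fun z => brec u z (t - 1) = 1).card},
          r u (t + ρ - 1) = some ρ) ∧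
        (∀ u, u ∉ F →
          u ∉ {u : V | u ∉ F ∧ Fintype.card V - 2 * f ≤
              (Finset.univ.filter fun z => brec u z (t - 1) = 1).card} →
          r u (t + ρ - 1) = none) := by
  intro v hv t ht hrv
  have ht4 : 4 ≤ t := by omega
  -- From a trigger-card bound, extract a correct broadcaster of 1.
  have exCorrect : ∀ u : V, ∀ m : ℕ,
      Fintype.card V - 2 * f ≤
        ((Finset.univ : Finset V).filter fun z => brec u z m = 1).card →
      ∃ w, w ∉ F ∧ b w m = 1 := by
    intro u m hcard
    set S := (Finset.univ : Finset V).filter fun z => brec u z m = 1 with hS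
    have hsd : S.card - F.card ≤ (S \ F).card := Finset.le_card_sdiff F S
    have hpos : 0 < (S \ F).card := by omega
    obtain ⟨w, hw⟩ := Finset.card_pos.mp hpos
    rw [Finset.mem_sdiff] at hw
    obtain ⟨hwS, hwF⟩ := hw
    rw [hS, Finset.mem_filter] at hwS
    exact ⟨w, hwF, by rw [← hbrec u w hwF m]; exact hwS.2⟩
  -- step lemmas for the recursion
  have step1 : ∀ u, u ∉ F → ∀ s, 2 ≤ s →
      Fintype.card V - 2 * f ≤
        ((Finset.univ : Finset V).filter fun z => brec u z (s - 1) = 1).card →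
      r u s = some 1 := by
    intro u hu s hs h
    rw [hr u hu s hs, if_pos h]
  have step2 : ∀ u, u ∉ F → ∀ s, 2 ≤ s →
      ¬ (Fintype.card V - 2 * f ≤
        ((Finset.univ : Finset V).filter fun z => brec u z (s - 1) = 1).card) →
      ∀ ρ, r u (s - 1) = some ρ → ρ < T → r u s = some (ρ + 1) := by
    intro u hu s hs hn ρ h hρ
    rw [hr u hu s hs, if_neg hn, h]
    exact if_pos hρ
  have step3 : ∀ u, u ∉ F → ∀ s, 2 ≤ s →
      ¬ (Fintype.card V - 2 * f ≤
        ((Finset.univ : Finset V).filter fun z => brec u z (s - 1) = 1).card) →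
      ∀ ρ, r u (s - 1) = some ρ → ¬ ρ < T → r u s = none := by
    intro u hu s hs hn ρ h hρ
    rw [hr u hu s hs, if_neg hn, h]
    exact if_neg hρ
  have step4 : ∀ u, u ∉ F → ∀ s, 2 ≤ s →
      ¬ (Fintype.card V - 2 * f ≤
        ((Finset.univ : Finset V).filter fun z => brec u z (s - 1) = 1).card) →
      r u (s - 1) = none → r u s = none := by
    intro u hu s hs hn h
    rw [hr u hu s hs, if_neg hn, h]
  -- v is triggered in round t
  have htv : Fintype.card V - 2 * f ≤
      ((Finset.univ : Finset V).filter fun z => brec v z (t - 1) = 1).card := by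
    by_contra hc
    rcases hrrange v hv (t - 1) with h | ⟨ρ, h, h1, h2⟩
    · rw [step4 v hv t (by omega) hc h] at hrv
      exact nomatch hrv
    · by_cases hρ : ρ < T
      · rw [step2 v hv t (by omega) hc ρ h hρ] at hrv
        have := Option.some.inj hrv; omega
      · rw [step3 v hv t (by omega) hc ρ h hρ] at hrv
        exact nomatch hrv
  obtain ⟨w₀, hw₀F, hw₀b⟩ := exCorrect v (t - 1) htv
  -- no trigger seen by a correct node with broadcast round m, t ≤ m ≤ t+T-2
  have hfut : ∀ u : V, ∀ m : ℕ, t ≤ m → m ≤ t + T - 2 →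
      ¬ (Fintype.card V - 2 * f ≤
        ((Finset.univ : Finset V).filter fun z => brec u z m = 1).card) := by
    intro u m hm1 hm2 hcard
    obtain ⟨w, hwF, hwb⟩ := exCorrect u m hcard
    exact hsparse w₀ w hw₀F hwF (t - 1) m (by omega) (by omega) (by omega)
      ⟨hw₀b, hwb⟩
  -- trace back: r u s = some k comes from a trigger broadcast round s - k
  have trace : ∀ k : ℕ, ∀ u, u ∉ F → ∀ s, k + 1 ≤ s → r u s = some k →
      1 ≤ k ∧ Fintype.card V - 2 * f ≤
        ((Finset.univ : Finset V).filter fun z => brec u z (s - k) = 1).card := by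
    intro k
    induction k with
    | zero =>
      intro u hu s hs h
      rcases hrrange u hu s with h' | ⟨ρ, h', h1, h2⟩
      · rw [h] at h'; exact nomatch h'
      · rw [h] at h'; have := Option.some.inj h'; omega
    | succ k ih =>
      intro u hu s hs h
      by_cases htrig : Fintype.card V - 2 * f ≤
          ((Finset.univ : Finset V).filter fun z => brec u z (s - 1) = 1).card
      · have h1 := step1 u hu s (by omega) htrig
        rw [h] at h1
        have hk0 : k = 0 := by have := Option.some.inj h1; omega
        subst hk0
        exact ⟨le_refl 1, htrig⟩
      · rcases hrrange u hu (s - 1) with h' | ⟨ρ, h', hρ1, hρ2⟩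
        · rw [step4 u hu s (by omega) htrig h'] at h
          exact nomatch h
        · by_cases hρ : ρ < T
          · rw [step2 u hu s (by omega) htrig ρ h' hρ] at h
            have hρk : ρ = k := by have := Option.some.inj h; omega
            subst hρk
            have := ih u hu (s - 1) (by omega) h'
            have heq : s - 1 - ρ = s - (ρ + 1) := by omega
            exact ⟨by omega, heq ▸ this.2⟩
          · rw [step3 u hu s (by omega) htrig ρ h' hρ] at h
            exact nomatch h
  -- non-triggered correct nodes have r u t = none
  have hnone : ∀ u, u ∉ F →
      ¬ (Fintype.card V - 2 * f ≤
        ((Finset.univ : Finset V).filter fun z => brec u z (t - 1) = 1).card) →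
      r u t = none := by
    intro u hu hcond
    rcases hrrange u hu (t - 1) with h' | ⟨ρ, h', h1, h2⟩
    · exact step4 u hu t (by omega) hcond h'
    · by_cases hρ : ρ < T
      · exfalso
        obtain ⟨-, hcard⟩ := trace ρ u hu (t - 1) (by omega) h'
        obtain ⟨w, hwF, hwb⟩ := exCorrect u (t - 1 - ρ) hcard
        exact hsparse w w₀ hwF hw₀F (t - 1 - ρ) (t - 1) (by omega) (by omega)
          (by omega) ⟨hwb, hw₀b⟩
      · exact step3 u hu t (by omega) hcond ρ h' hρ
  -- forward induction
  have main : ∀ j : ℕ, j ≤ T - 1 → ∀ u, u ∉ F →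
      ((Fintype.card V - 2 * f ≤
        ((Finset.univ : Finset V).filter fun z => brec u z (t - 1) = 1).card) →
        r u (t + j) = some (j + 1)) ∧
      (¬ (Fintype.card V - 2 * f ≤
        ((Finset.univ : Finset V).filter fun z => brec u z (t - 1) = 1).card) →
        r u (t + j) = none) := by
    intro j
    induction j with
    | zero =>
      intro _ u hu
      exact ⟨fun hcond => step1 u hu t (by omega) hcond,
        fun hcond => hnone u hu hcond⟩
    | succ j ih =>
      intro hj u hu
      have hprev : t + (j + 1) - 1 = t + j := by omega
      have hnotrig : ¬ (Fintype.card V - 2 * f ≤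
          ((Finset.univ : Finset V).filter fun z =>
            brec u z (t + (j + 1) - 1) = 1).card) := by
        rw [hprev]
        exact hfut u (t + j) (by omega) (by omega)
      obtain ⟨ih1, ih2⟩ := ih (by omega) u hu
      constructor
      · intro hcond
        have := step2 u hu (t + (j + 1)) (by omega) hnotrig (j + 1)
          (by rw [hprev]; exact ih1 hcond) (by omega)
        exact this
      · intro hcond
        exact step4 u hu (t + (j + 1)) (by omega) hnotrig
          (by rw [hprev]; exact ih2 hcond)
  refine ⟨⟨hv, htv⟩, ?_⟩
  intro ρ hρ1 hρ2
  have hidx : t + ρ - 1 = t + (ρ - 1) := by omega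
  constructor
  · intro u hu
    obtain ⟨huF, hcond⟩ := hu
    have := (main (ρ - 1) (by omega) u huF).1 hcond
    rw [hidx, this]
    congr 1
    omega
  · intro u huF hu
    have hcond : ¬ (Fintype.card V - 2 * f ≤
        ((Finset.univ : Finset V).filter fun z => brec u z (t - 1) = 1).card) := by
      intro hc
      exact hu ⟨huF, hc⟩
    rw [hidx]
    exact (main (ρ - 1) (by omega) u huF).2 hcond
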